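/- Let f(x) = −β sin(x) + c with β > 0 and |c| ≤ β sin(γ) for some γ ∈ [0, π/2). Then x̄ = arcsin(c/β) is the unique equilibrium of ẋ = f(x) in [−γ, γ], and the function V(x) = (x − x̄)² satisfies V̇(x) = 2(x − x̄)f(x) ≤ −2β cos(γ) V(x) for all x ∈ [−γ, γ]. -/

import Mathlib

lemma sin_sub_ge (γ : ℝ) (hγ0 : 0 ≤ γ) (hγπ : γ < Real.pi / 2) :
    ∀ a ∈ Set.Icc (-γ) γ, ∀ b ∈ Set.Icc (-γ) γ, a ≤ b →
      Real.cos γ * (b - a) ≤ Real.sin b - Real.sin a := by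
  intro a ha b hb hab
  refine Convex.mul_sub_le_image_sub_of_le_deriv (convex_Icc _ _)
    Real.continuousOn_sin Real.differentiable_sin.differentiableOn ?_ a ha b hb hab
  intro x hx
  rw [interior_Icc] at hx
  rw [Real.deriv_sin, ← Real.cos_abs x]
  apply Real.cos_le_cos_of_nonneg_of_le_pi (abs_nonneg x)
  · linarith [Real.pi_pos]
  · rw [abs_le]; exact ⟨hx.1.le, hx.2.le⟩

/-- For `f(x) = −β sin x + c` with `β > 0` and `|c| ≤ β sin γ`, `γ ∈ [0, π/2)`:
`x̄ = arcsin(c/β)` is the unique equilibrium in `[−γ, γ]`, and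
`V(x) = (x − x̄)²` satisfies `2(x − x̄) f(x) ≤ −2 β cos γ · V(x)` on `[−γ, γ]`. -/
theorem scalar_equilibrium_and_lyapunov
    (β γ c : ℝ) (hβ : 0 < β) (hγ : γ ∈ Set.Ico 0 (Real.pi / 2))
    (hc : |c| ≤ β * Real.sin γ) :
    let f : ℝ → ℝ := fun x => -β * Real.sin x + c
    let xbar := Real.arcsin (c / β)
    xbar ∈ Set.Icc (-γ) γ ∧
    f xbar = 0 ∧
    (∀ x ∈ Set.Icc (-γ) γ, f x = 0 → x = xbar) ∧
    (∀ x ∈ Set.Icc (-γ) γ,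
      2 * (x - xbar) * f x ≤ -2 * β * Real.cos γ * (x - xbar) ^ 2) := by
  intro f xbar
  obtain ⟨hγ0, hγπ⟩ := hγ
  have hpi2 : -(Real.pi / 2) ≤ γ := by linarith [Real.pi_pos]
  have hcβ : |c / β| ≤ Real.sin γ := by
    rw [abs_div, abs_of_pos hβ, div_le_iff₀ hβ]
    linarith
  have h1 := (abs_le.mp hcβ).1
  have h2 := (abs_le.mp hcβ).2
  have hs1 : Real.sin γ ≤ 1 := Real.sin_le_one γ
  have hsin_xbar : Real.sin xbar = c / β :=
    Real.sin_arcsin (by linarith [Real.neg_one_le_sin γ]) (by linarith)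
  have hxbar_mem : xbar ∈ Set.Icc (-γ) γ := by
    constructor
    · have := Real.monotone_arcsin (show Real.sin (-γ) ≤ c / β by
        rw [Real.sin_neg]; linarith)
      rwa [Real.arcsin_sin (by linarith) (by linarith)] at this
    · have := Real.monotone_arcsin h2
      rwa [Real.arcsin_sin hpi2 hγπ.le] at this
  have hfxbar : f xbar = 0 := by
    simp only [f, hsin_xbar]
    field_simp
    ring
  refine ⟨hxbar_mem, hfxbar, ?_, ?_⟩
  · intro x hx hfx
    have hsx : Real.sin x = c / β := by
      have : β * Real.sin x = c := by
        simp only [f] at hfx; linarith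
      field_simp [← this, mul_comm]
      linarith [mul_comm β (Real.sin x)]
    have : Real.arcsin (Real.sin x) = x :=
      Real.arcsin_sin (by linarith [hx.1]) (by linarith [hx.2])
    rw [← this, hsx]
  · intro x hx
    have key : Real.cos γ * (x - xbar) ^ 2 ≤ (x - xbar) * (Real.sin x - Real.sin xbar) := by
      rcases le_total xbar x with h | h
      · have := sin_sub_ge γ hγ0 hγπ xbar hxbar_mem x hx h
        nlinarith
      · have := sin_sub_ge γ hγ0 hγπ x hx xbar hxbar_mem h
        nlinarith
    have hccb : c = β * Real.sin xbar := by rw [hsin_xbar]; field_simp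
    simp only [f]
    rw [hccb]
    nlinarith [mul_le_mul_of_nonneg_left key (by linarith : (0:ℝ) ≤ 2*β)]
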